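/- arXiv:1401.5002 — 2 statements merged into one kernel-verified Lean document; each statement's English description precedes it below -/
import Mathlib

section
/- Let φ denote the standard normal density and Φ the standard normal CDF. Then ∫∫_{0 < x₂ < x₃} {φ(x₂)φ(x₃ − x₂) − φ(x₃)φ(0)} dx₂ dx₃ = Φ(0)² − φ(0)·∫_{−∞}^{0} Φ(x) dx. -/
open MeasureTheory

/-- The standard normal density. -/
noncomputable def stdPdf (x : ℝ) : ℝ := (Real.sqrt (2 * Real.pi))⁻¹ * Real.exp (-x ^ 2 / 2)

/-- The standard normal CDF. -/
noncomputable def stdCdf (x : ℝ) : ℝ := ∫ t in Set.Iic x, stdPdf t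

open Set Filter Topology

lemma stdPdf_def : stdPdf = ProbabilityTheory.gaussianPDFReal 0 1 := by
  ext x
  simp [stdPdf, ProbabilityTheory.gaussianPDFReal]

lemma stdPdf_nonneg (x : ℝ) : 0 ≤ stdPdf x := by
  unfold stdPdf; positivity

lemma stdPdf_neg (x : ℝ) : stdPdf (-x) = stdPdf x := by
  simp [stdPdf, neg_sq]

lemma continuous_stdPdf : Continuous stdPdf := by
  unfold stdPdf; fun_prop

lemma integrable_stdPdf : Integrable stdPdf := by
  rw [stdPdf_def]; exact ProbabilityTheory.integrable_gaussianPDFReal 0 1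

lemma integral_stdPdf : ∫ x, stdPdf x = 1 := by
  rw [stdPdf_def]; exact ProbabilityTheory.integral_gaussianPDFReal_eq_one 0 one_ne_zero

lemma integral_Iic_eq_Ioi : ∫ x in Iic (0:ℝ), stdPdf x = ∫ x in Ioi (0:ℝ), stdPdf x := by
  have := integral_comp_neg_Ioi (0:ℝ) stdPdf
  simp only [neg_zero] at this
  rw [← this]
  exact setIntegral_congr_fun measurableSet_Ioi fun x _ => (stdPdf_neg x)

lemma integral_Ioi_stdPdf : ∫ x in Ioi (0:ℝ), stdPdf x = 1/2 := by
  have h := intervalIntegral.integral_Iic_add_Ioi (b := (0:ℝ)) (μ := volume)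
    integrable_stdPdf.integrableOn integrable_stdPdf.integrableOn
  rw [integral_stdPdf, integral_Iic_eq_Ioi] at h
  linarith

lemma stdCdf_zero : stdCdf 0 = 1/2 := by
  rw [stdCdf, integral_Iic_eq_Ioi, integral_Ioi_stdPdf]

lemma hasDerivAt_neg_stdPdf (y : ℝ) :
    HasDerivAt (fun y => -stdPdf y) (y * stdPdf y) y := by
  have h : HasDerivAt (fun y : ℝ => -y ^ 2 / 2) (-y) y := by
    have := ((hasDerivAt_pow 2 y).neg).div_const 2
    refine this.congr_deriv ?_
    ring
  have h2 := ((h.exp).const_mul ((Real.sqrt (2 * Real.pi))⁻¹)).neg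
  refine h2.congr_deriv ?_
  unfold stdPdf
  ring

lemma tendsto_stdPdf_atTop : Tendsto stdPdf atTop (𝓝 0) := by
  have h0 : Tendsto (fun y : ℝ => y ^ 2 / 2) atTop atTop :=
    (tendsto_pow_atTop two_ne_zero).atTop_div_const (by norm_num)
  have h1 : Tendsto (fun y : ℝ => -y ^ 2 / 2) atTop atBot := by
    simpa [neg_div] using tendsto_neg_atBot_iff.2 h0
  have h2 : Tendsto stdPdf atTop (𝓝 ((Real.sqrt (2 * Real.pi))⁻¹ * 0)) :=
    (Real.tendsto_exp_atBot.comp h1).const_mul _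
  simpa using h2

lemma integrableOn_mul_stdPdf_Ioi :
    IntegrableOn (fun y => y * stdPdf y) (Ioi (0:ℝ)) := by
  refine integrableOn_Ioi_deriv_of_nonneg' (g := fun y => -stdPdf y) (l := 0)
    (fun x _ => hasDerivAt_neg_stdPdf x)
    (fun x hx => mul_nonneg (le_of_lt hx) (stdPdf_nonneg x)) ?_
  simpa using tendsto_stdPdf_atTop.neg

lemma integral_mul_stdPdf_Ioi : ∫ y in Ioi (0:ℝ), y * stdPdf y = stdPdf 0 := by
  have := integral_Ioi_of_hasDerivAt_of_nonneg' (g := fun y => -stdPdf y) (l := 0)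
    (fun x _ => hasDerivAt_neg_stdPdf x)
    (fun x hx => mul_nonneg (le_of_lt hx) (stdPdf_nonneg x))
    (by simpa using tendsto_stdPdf_atTop.neg)
  simpa using this

lemma integral_neg_mul_stdPdf_Iic : ∫ t in Iic (0:ℝ), -t * stdPdf t = stdPdf 0 := by
  have h := integral_comp_neg_Iic (0:ℝ) (fun y => y * stdPdf y)
  simp only [neg_zero] at h
  rw [← integral_mul_stdPdf_Ioi, ← h]
  exact setIntegral_congr_fun measurableSet_Iic fun x _ => by rw [stdPdf_neg]

lemma integrableOn_neg_mul_stdPdf_Iic :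
    IntegrableOn (fun t => -t * stdPdf t) (Iic (0:ℝ)) := by
  have A : MeasurableEmbedding fun x : ℝ => -x :=
    (Homeomorph.neg ℝ).isClosedEmbedding.measurableEmbedding
  have key : IntegrableOn (fun y => y * stdPdf y) (Ici (0:ℝ)) := by
    rw [integrableOn_Ici_iff_integrableOn_Ioi]
    exact integrableOn_mul_stdPdf_Ioi
  have hmap : (volume : Measure ℝ).restrict (Ici (0:ℝ))
      = ((volume : Measure ℝ).restrict (Iic (0:ℝ))).map (fun x => -x) := by
    conv_lhs => rw [← Measure.map_neg_eq_self (volume : Measure ℝ)]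
    rw [Measure.restrict_map A.measurable measurableSet_Ici]
    congr 1
    ext x
    simp
  rw [IntegrableOn, hmap, A.integrable_map_iff] at key
  have key2 : IntegrableOn (fun t : ℝ => (-t) * stdPdf (-t)) (Iic (0:ℝ)) := key
  exact key2.congr_fun (fun x _ => by simp [stdPdf_neg]) measurableSet_Iic

lemma indicator_shift (x y : ℝ) :
    (Ioi x).indicator (fun y => stdPdf (y - x)) y = (Ioi 0).indicator stdPdf (y - x) := by
  by_cases h : x < y <;> simp [Set.indicator_apply, sub_pos, h]

lemma integral_shift (x : ℝ) : ∫ y in Ioi x, stdPdf (y - x) = 1/2 := by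
  rw [← integral_indicator measurableSet_Ioi]
  simp_rw [indicator_shift]
  rw [integral_sub_right_eq_self ((Ioi (0:ℝ)).indicator stdPdf) x,
    integral_indicator measurableSet_Ioi, integral_Ioi_stdPdf]

lemma integrableOn_shift (x : ℝ) :
    IntegrableOn (fun y => stdPdf (y - x)) (Ioi x) := by
  have : Integrable (fun y => (Ioi (0:ℝ)).indicator stdPdf (y - x)) :=
    (integrable_stdPdf.indicator measurableSet_Ioi).comp_sub_right x
  refine (integrable_indicator_iff measurableSet_Ioi).1 ?_
  exact this.congr (Eventually.of_forall fun y => (indicator_shift x y).symm)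

/-- The open triangular region. -/
def Sreg : Set (ℝ × ℝ) := {p | 0 < p.1 ∧ p.1 < p.2}

lemma measurableSet_Sreg : MeasurableSet Sreg := by
  have : Sreg = {p : ℝ × ℝ | 0 < p.1} ∩ {p : ℝ × ℝ | p.1 < p.2} := rfl
  rw [this]
  exact (measurableSet_lt measurable_const measurable_fst).inter
    (measurableSet_lt measurable_fst measurable_snd)

lemma f1_indicator (x y : ℝ) :
    Sreg.indicator (fun p : ℝ × ℝ => stdPdf p.1 * stdPdf (p.2 - p.1)) (x, y)
      = (Ioi (0:ℝ)).indicator stdPdf x * (Ioi x).indicator (fun y => stdPdf (y - x)) y := by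
  by_cases hx : 0 < x <;> by_cases hy : x < y <;>
    simp [Sreg, Set.indicator_apply, hx, hy]

lemma integrable_f1 :
    Integrable (Sreg.indicator fun p : ℝ × ℝ => stdPdf p.1 * stdPdf (p.2 - p.1))
      ((volume : Measure ℝ).prod volume) := by
  have hmeas : AEStronglyMeasurable
      (Sreg.indicator fun p : ℝ × ℝ => stdPdf p.1 * stdPdf (p.2 - p.1))
      ((volume : Measure ℝ).prod volume) := by
    refine (AEStronglyMeasurable.indicator ?_ measurableSet_Sreg)
    exact ((continuous_stdPdf.comp continuous_fst).mul
      (continuous_stdPdf.comp (continuous_snd.sub continuous_fst))).aestronglyMeasurable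
  refine (integrable_prod_iff hmeas).2 ⟨Eventually.of_forall fun x => ?_, ?_⟩
  · simp_rw [f1_indicator]
    have h1 : Integrable ((Ioi x).indicator (fun y => stdPdf (y - x))) :=
      (integrable_indicator_iff measurableSet_Ioi).2 (integrableOn_shift x)
    exact h1.const_mul _
  · have hfun : (fun x => ∫ y, ‖Sreg.indicator
        (fun p : ℝ × ℝ => stdPdf p.1 * stdPdf (p.2 - p.1)) (x, y)‖)
        = fun x => (Ioi (0:ℝ)).indicator stdPdf x * (1/2) := by
      funext x
      simp_rw [f1_indicator]
      have hnn : ∀ y, 0 ≤ (Ioi (0:ℝ)).indicator stdPdf x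
          * (Ioi x).indicator (fun y => stdPdf (y - x)) y := fun y =>
        mul_nonneg (indicator_nonneg (fun t _ => stdPdf_nonneg t) x)
          (indicator_nonneg (fun t _ => stdPdf_nonneg (t - x)) y)
      simp_rw [fun y => Real.norm_of_nonneg (hnn y)]
      rw [integral_const_mul, integral_indicator measurableSet_Ioi, integral_shift x]
    rw [hfun]
    exact (integrable_stdPdf.indicator measurableSet_Ioi).mul_const _

lemma integral_term1 :
    ∫ p in Sreg, stdPdf p.1 * stdPdf (p.2 - p.1) = 1/4 := by
  rw [← integral_indicator measurableSet_Sreg]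
  rw [Measure.volume_eq_prod ℝ ℝ]
  rw [integral_prod _ integrable_f1]
  have : ∀ x : ℝ, (∫ y, Sreg.indicator
      (fun p : ℝ × ℝ => stdPdf p.1 * stdPdf (p.2 - p.1)) (x, y))
      = (Ioi (0:ℝ)).indicator stdPdf x * (1/2) := by
    intro x
    simp_rw [f1_indicator]
    rw [integral_const_mul, integral_indicator measurableSet_Ioi, integral_shift x]
  simp_rw [this]
  rw [integral_mul_const, integral_indicator measurableSet_Ioi, integral_Ioi_stdPdf]
  norm_num

lemma f2_indicator (x y : ℝ) :
    Sreg.indicator (fun p : ℝ × ℝ => stdPdf p.2 * stdPdf 0) (x, y)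
      = (Ioo 0 y).indicator (fun _ => stdPdf y * stdPdf 0) x := by
  by_cases hx : 0 < x <;> by_cases hy : x < y <;>
    simp [Sreg, Set.indicator_apply, hx, hy]

lemma integrable_f2 :
    Integrable (Sreg.indicator fun p : ℝ × ℝ => stdPdf p.2 * stdPdf 0)
      ((volume : Measure ℝ).prod volume) := by
  have hmeas : AEStronglyMeasurable
      (Sreg.indicator fun p : ℝ × ℝ => stdPdf p.2 * stdPdf 0)
      ((volume : Measure ℝ).prod volume) :=
    AEStronglyMeasurable.indicator
      (((continuous_stdPdf.comp continuous_snd).mul continuous_const).aestronglyMeasurable)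
      measurableSet_Sreg
  refine (integrable_prod_iff' hmeas).2 ⟨Eventually.of_forall fun y => ?_, ?_⟩
  · simp_rw [f2_indicator]
    exact (integrable_indicator_iff measurableSet_Ioo).2
      (integrableOn_const measure_Ioo_lt_top.ne)
  · have hfun : (fun y => ∫ x, ‖Sreg.indicator
        (fun p : ℝ × ℝ => stdPdf p.2 * stdPdf 0) (x, y)‖)
        = fun y => (Ioi (0:ℝ)).indicator (fun y => (stdPdf y * stdPdf 0) * y) y := by
      funext y
      simp_rw [f2_indicator]
      have hnn : ∀ x, 0 ≤ (Ioo (0:ℝ) y).indicator (fun _ => stdPdf y * stdPdf 0) x :=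
        fun x => indicator_nonneg
          (fun t _ => mul_nonneg (stdPdf_nonneg y) (stdPdf_nonneg 0)) x
      simp_rw [fun x => Real.norm_of_nonneg (hnn x)]
      rw [integral_indicator_const _ measurableSet_Ioo]
      by_cases hy : 0 < y
      · rw [measureReal_def, Real.volume_Ioo, smul_eq_mul, ENNReal.toReal_ofReal (by linarith),
          indicator_of_mem (mem_Ioi.2 hy)]
        ring
      · rw [Ioo_eq_empty (by simpa using hy), indicator_of_notMem (by simpa using hy)]
        simp
    rw [hfun]
    refine (integrable_indicator_iff measurableSet_Ioi).2 ?_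
    have h2 : IntegrableOn (fun x => x * stdPdf x * stdPdf 0) (Ioi (0:ℝ)) :=
      integrableOn_mul_stdPdf_Ioi.mul_const (stdPdf 0)
    exact IntegrableOn.congr_fun h2 (fun y _ => by ring) measurableSet_Ioi

lemma integral_term2 :
    ∫ p in Sreg, stdPdf p.2 * stdPdf 0 = stdPdf 0 * stdPdf 0 := by
  rw [← integral_indicator measurableSet_Sreg, Measure.volume_eq_prod ℝ ℝ]
  rw [integral_prod_symm _ integrable_f2]
  have key : ∀ y : ℝ, (∫ x, Sreg.indicator
      (fun p : ℝ × ℝ => stdPdf p.2 * stdPdf 0) (x, y))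
      = (Ioi (0:ℝ)).indicator (fun y => (stdPdf y * stdPdf 0) * y) y := by
    intro y
    simp_rw [f2_indicator]
    rw [integral_indicator_const _ measurableSet_Ioo]
    by_cases hy : 0 < y
    · rw [measureReal_def, Real.volume_Ioo, smul_eq_mul, ENNReal.toReal_ofReal (by linarith),
        indicator_of_mem (mem_Ioi.2 hy)]
      ring
    · rw [Ioo_eq_empty (by simpa using hy), indicator_of_notMem (by simpa using hy)]
      simp
  simp_rw [key]
  rw [integral_indicator measurableSet_Ioi]
  have : ∫ y in Ioi (0:ℝ), (stdPdf y * stdPdf 0) * y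
      = ∫ y in Ioi (0:ℝ), (y * stdPdf y) * stdPdf 0 :=
    setIntegral_congr_fun measurableSet_Ioi fun y _ => by ring
  rw [this, integral_mul_const, integral_mul_stdPdf_Ioi]

/-- The region for the CDF integral. -/
def Treg : Set (ℝ × ℝ) := {p | p.1 ≤ 0 ∧ p.2 ≤ p.1}

lemma measurableSet_Treg : MeasurableSet Treg := by
  have : Treg = {p : ℝ × ℝ | p.1 ≤ 0} ∩ {p : ℝ × ℝ | p.2 ≤ p.1} := rfl
  rw [this]
  exact (measurableSet_le measurable_fst measurable_const).inter
    (measurableSet_le measurable_snd measurable_fst)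

lemma f3_indicator_snd (x t : ℝ) :
    Treg.indicator (fun p : ℝ × ℝ => stdPdf p.2) (x, t)
      = (Icc t 0).indicator (fun _ => stdPdf t) x := by
  by_cases hx : x ≤ 0 <;> by_cases ht : t ≤ x <;>
    simp [Treg, Set.indicator_apply, Set.mem_Icc, hx, ht]

lemma integrable_f3 :
    Integrable (Treg.indicator fun p : ℝ × ℝ => stdPdf p.2)
      ((volume : Measure ℝ).prod volume) := by
  have hmeas : AEStronglyMeasurable (Treg.indicator fun p : ℝ × ℝ => stdPdf p.2)
      ((volume : Measure ℝ).prod volume) :=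
    AEStronglyMeasurable.indicator
      ((continuous_stdPdf.comp continuous_snd).aestronglyMeasurable) measurableSet_Treg
  refine (integrable_prod_iff' hmeas).2 ⟨Eventually.of_forall fun t => ?_, ?_⟩
  · simp_rw [f3_indicator_snd]
    exact (integrable_indicator_iff measurableSet_Icc).2
      (integrableOn_const measure_Icc_lt_top.ne)
  · have hfun : (fun t => ∫ x, ‖Treg.indicator (fun p : ℝ × ℝ => stdPdf p.2) (x, t)‖)
        = fun t => (Iic (0:ℝ)).indicator (fun t => stdPdf t * (-t)) t := by
      funext t
      simp_rw [f3_indicator_snd]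
      have hnn : ∀ x, 0 ≤ (Icc t (0:ℝ)).indicator (fun _ => stdPdf t) x :=
        fun x => indicator_nonneg (fun s _ => stdPdf_nonneg t) x
      simp_rw [fun x => Real.norm_of_nonneg (hnn x)]
      rw [integral_indicator_const _ measurableSet_Icc]
      by_cases ht : t ≤ 0
      · rw [measureReal_def, Real.volume_Icc, smul_eq_mul, ENNReal.toReal_ofReal (by linarith),
          indicator_of_mem (mem_Iic.2 ht)]
        ring
      · rw [Icc_eq_empty (by simpa using ht), indicator_of_notMem (by simpa using ht)]
        simp
    rw [hfun]
    refine (integrable_indicator_iff measurableSet_Iic).2 ?_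
    exact IntegrableOn.congr_fun integrableOn_neg_mul_stdPdf_Iic
      (fun t _ => by ring) measurableSet_Iic

lemma integral_cdf_Iic : ∫ x in Iic (0:ℝ), stdCdf x = stdPdf 0 := by
  have lhs_eq : ∫ x in Iic (0:ℝ), stdCdf x
      = ∫ x, ∫ t, Treg.indicator (fun p : ℝ × ℝ => stdPdf p.2) (x, t) := by
    rw [← integral_indicator measurableSet_Iic]
    congr 1
    funext x
    by_cases hx : x ≤ 0
    · rw [indicator_of_mem (mem_Iic.2 hx)]
      have : ∀ t, Treg.indicator (fun p : ℝ × ℝ => stdPdf p.2) (x, t)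
          = (Iic x).indicator stdPdf t := by
        intro t
        by_cases ht : t ≤ x <;> simp [Treg, Set.indicator_apply, hx, ht]
      simp_rw [this]
      rw [stdCdf, ← integral_indicator measurableSet_Iic]
    · rw [indicator_of_notMem (by simpa using hx)]
      have : ∀ t, Treg.indicator (fun p : ℝ × ℝ => stdPdf p.2) (x, t) = 0 := by
        intro t
        apply indicator_of_notMem
        simp only [Treg, Set.mem_setOf_eq, not_and]
        intro h
        exact absurd h hx
      simp_rw [this, integral_zero]
  rw [lhs_eq, ← integral_prod _ integrable_f3, integral_prod_symm _ integrable_f3]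
  have key : ∀ t : ℝ, (∫ x, Treg.indicator (fun p : ℝ × ℝ => stdPdf p.2) (x, t))
      = (Iic (0:ℝ)).indicator (fun t => stdPdf t * (-t)) t := by
    intro t
    simp_rw [f3_indicator_snd]
    rw [integral_indicator_const _ measurableSet_Icc]
    by_cases ht : t ≤ 0
    · rw [measureReal_def, Real.volume_Icc, smul_eq_mul, ENNReal.toReal_ofReal (by linarith),
        indicator_of_mem (mem_Iic.2 ht)]
      ring
    · rw [Icc_eq_empty (by simpa using ht), indicator_of_notMem (by simpa using ht)]
      simp
  simp_rw [key]
  rw [integral_indicator measurableSet_Iic]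
  have : ∫ t in Iic (0:ℝ), stdPdf t * (-t) = ∫ t in Iic (0:ℝ), -t * stdPdf t :=
    setIntegral_congr_fun measurableSet_Iic fun t _ => by ring
  rw [this, integral_neg_mul_stdPdf_Iic]

theorem stmt10 :
    ∫ p in {p : ℝ × ℝ | 0 < p.1 ∧ p.1 < p.2},
        (stdPdf p.1 * stdPdf (p.2 - p.1) - stdPdf p.2 * stdPdf 0) =
      stdCdf 0 ^ 2 - stdPdf 0 * ∫ x in Set.Iic (0 : ℝ), stdCdf x := by
  have h1 : IntegrableOn (fun p : ℝ × ℝ => stdPdf p.1 * stdPdf (p.2 - p.1)) Sreg := by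
    refine (integrable_indicator_iff measurableSet_Sreg).1 ?_
    rw [Measure.volume_eq_prod ℝ ℝ]
    exact integrable_f1
  have h2 : IntegrableOn (fun p : ℝ × ℝ => stdPdf p.2 * stdPdf 0) Sreg := by
    refine (integrable_indicator_iff measurableSet_Sreg).1 ?_
    rw [Measure.volume_eq_prod ℝ ℝ]
    exact integrable_f2
  have : ∫ p in Sreg, (stdPdf p.1 * stdPdf (p.2 - p.1) - stdPdf p.2 * stdPdf 0)
      = (∫ p in Sreg, stdPdf p.1 * stdPdf (p.2 - p.1)) - ∫ p in Sreg, stdPdf p.2 * stdPdf 0 :=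
    integral_sub h1 h2
  rw [show {p : ℝ × ℝ | 0 < p.1 ∧ p.1 < p.2} = Sreg from rfl, this,
    integral_term1, integral_term2, integral_cdf_Iic, stdCdf_zero]
  norm_num
end

section
/- Let k = p and define, for a measurable bounded path v : [0,1−b] → ℝ^k, G(μ) = (2/b)·sup_λ ∫_0^{1−b} log(1 + ⟪λ, v(r) − μ⟫) dr + (c*/b)·⟪μ, Φ^{-1}μ⟫ with Φ positive definite and c* > 0. If μ lies outside the closed convex hull of the range of v, then G(μ) = +∞; consequently inf_{μ ∈ ℝ^k} G(μ) = inf over μ in the closed convex hull of {v(r) : r ∈ (0,1−b)}. -/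
open scoped RealInnerProductSpace Classical

theorem stmt19 {k : ℕ} (b cstar : ℝ) (hb : b ∈ Set.Ioo (0 : ℝ) 1) (hc : 0 < cstar)
    (v : ℝ → EuclideanSpace ℝ (Fin k)) (hmeas : Measurable v)
    (hbdd : ∃ R : ℝ, ∀ r ∈ Set.Icc (0 : ℝ) (1 - b), ‖v r‖ ≤ R)
    (Φinv : EuclideanSpace ℝ (Fin k) →ₗ[ℝ] EuclideanSpace ℝ (Fin k))
    (hΦ : ∀ μ : EuclideanSpace ℝ (Fin k), μ ≠ 0 → 0 < ⟪μ, Φinv μ⟫)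
    (G : EuclideanSpace ℝ (Fin k) → EReal)
    (hG : G = fun μ =>
      ((2 / b : ℝ) : EReal) * (⨆ l : EuclideanSpace ℝ (Fin k),
        if ∀ r ∈ Set.Ioc (0 : ℝ) (1 - b), 0 < 1 + ⟪l, v r - μ⟫ then
          ((∫ r in Set.Ioc (0 : ℝ) (1 - b), Real.log (1 + ⟪l, v r - μ⟫) : ℝ) : EReal)
        else ⊥) +
      ((cstar / b * ⟪μ, Φinv μ⟫ : ℝ) : EReal)) :
    (∀ μ, μ ∉ closure (convexHull ℝ (v '' Set.Ioc (0 : ℝ) (1 - b))) → G μ = ⊤) ∧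
    (⨅ μ, G μ = ⨅ μ ∈ closure (convexHull ℝ (v '' Set.Ioc (0 : ℝ) (1 - b))), G μ) := by
  obtain ⟨hb0, hb1⟩ := hb
  obtain ⟨R, hR⟩ := hbdd
  have h1b : (0 : ℝ) < 1 - b := by linarith
  have key : ∀ μ, μ ∉ closure (convexHull ℝ (v '' Set.Ioc (0 : ℝ) (1 - b))) → G μ = ⊤ := by
    intro μ hμ
    obtain ⟨f, u, hfu, hfS⟩ := geometric_hahn_banach_point_closed
      (convex_convexHull ℝ _).closure isClosed_closure hμ
    set w := (InnerProductSpace.toDual ℝ (EuclideanSpace ℝ (Fin k))).symm f with hwdef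
    have hw : ∀ x, ⟪w, x⟫ = f x := fun x => InnerProductSpace.toDual_symm_apply
    set δ := u - f μ with hδdef
    have hδpos : 0 < δ := sub_pos.2 hfu
    have hsep : ∀ r ∈ Set.Ioc (0 : ℝ) (1 - b), δ ≤ ⟪w, v r - μ⟫ := by
      intro r hr
      have h1 : u < f (v r) :=
        hfS _ (subset_closure (subset_convexHull ℝ _ (Set.mem_image_of_mem v hr)))
      rw [hw, map_sub, hδdef]
      linarith
    -- the supremum is ⊤
    have hsup : (⨆ l : EuclideanSpace ℝ (Fin k),
        if ∀ r ∈ Set.Ioc (0 : ℝ) (1 - b), 0 < 1 + ⟪l, v r - μ⟫ then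
          ((∫ r in Set.Ioc (0 : ℝ) (1 - b), Real.log (1 + ⟪l, v r - μ⟫) : ℝ) : EReal)
        else ⊥) = ⊤ := by
      rw [iSup_eq_top]
      intro y hy
      obtain ⟨M, hyM, -⟩ := EReal.exists_between_coe_real hy
      set a : ℝ := Real.exp (M / (1 - b)) / δ with hadef
      have ha : 0 < a := div_pos (Real.exp_pos _) hδpos
      have haδ : a * δ = Real.exp (M / (1 - b)) := div_mul_cancel₀ _ (ne_of_gt hδpos)
      refine ⟨a • w, ?_⟩
      have hlow : ∀ r ∈ Set.Ioc (0 : ℝ) (1 - b), a * δ ≤ ⟪a • w, v r - μ⟫ := by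
        intro r hr
        rw [real_inner_smul_left]
        exact mul_le_mul_of_nonneg_left (hsep r hr) ha.le
      have hpos : ∀ r ∈ Set.Ioc (0 : ℝ) (1 - b), 0 < 1 + ⟪a • w, v r - μ⟫ := by
        intro r hr
        have := hlow r hr
        nlinarith [mul_pos ha hδpos]
      rw [if_pos hpos]
      -- bounds
      have hR0 : 0 ≤ R := le_trans (norm_nonneg _) (hR 0 ⟨le_refl _, h1b.le⟩)
      set D : ℝ := ‖a • w‖ * (R + ‖μ‖) with hDdef
      have hub : ∀ r ∈ Set.Ioc (0 : ℝ) (1 - b), ⟪a • w, v r - μ⟫ ≤ D := by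
        intro r hr
        calc ⟪a • w, v r - μ⟫ ≤ ‖a • w‖ * ‖v r - μ‖ := real_inner_le_norm _ _
          _ ≤ ‖a • w‖ * (R + ‖μ‖) := by
              refine mul_le_mul_of_nonneg_left ?_ (norm_nonneg _)
              calc ‖v r - μ‖ ≤ ‖v r‖ + ‖μ‖ := norm_sub_le _ _
                _ ≤ R + ‖μ‖ := by
                    have := hR r ⟨hr.1.le, hr.2⟩; linarith
      have haD : a * δ ≤ D := le_trans (hlow (1 - b) ⟨h1b, le_refl _⟩)
        (hub (1 - b) ⟨h1b, le_refl _⟩)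
      have haδpos : 0 < a * δ := mul_pos ha hδpos
      -- measurability of integrand
      have hgm : Measurable (fun r => Real.log (1 + ⟪(a • w : EuclideanSpace ℝ (Fin k)), v r - μ⟫)) := by
        apply Real.measurable_log.comp
        exact (measurable_const.add (measurable_const.inner (hmeas.sub measurable_const)))
      -- integrability
      set C : ℝ := max |Real.log (1 + a * δ)| |Real.log (1 + D)| with hCdef
      have hbound : ∀ r ∈ Set.Ioc (0 : ℝ) (1 - b),
          ‖Real.log (1 + ⟪(a • w : EuclideanSpace ℝ (Fin k)), v r - μ⟫)‖ ≤ C := by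
        intro r hr
        rw [Real.norm_eq_abs, abs_le]
        constructor
        · have h1 : Real.log (1 + a * δ) ≤ Real.log (1 + ⟪a • w, v r - μ⟫) :=
            Real.log_le_log (by linarith) (by linarith [hlow r hr])
          calc -C ≤ -|Real.log (1 + a * δ)| := by
                  simp only [neg_le_neg_iff]; exact le_max_left _ _
            _ ≤ Real.log (1 + a * δ) := neg_abs_le _
            _ ≤ _ := h1
        · have h2 : Real.log (1 + ⟪a • w, v r - μ⟫) ≤ Real.log (1 + D) :=
            Real.log_le_log (hpos r hr) (by linarith [hub r hr])
          exact le_trans h2 (le_trans (le_abs_self _) (le_max_right _ _))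
      have hint : MeasureTheory.IntegrableOn
          (fun r => Real.log (1 + ⟪(a • w : EuclideanSpace ℝ (Fin k)), v r - μ⟫))
          (Set.Ioc (0 : ℝ) (1 - b)) := by
        refine MeasureTheory.Integrable.mono' (MeasureTheory.integrable_const C)
          hgm.aestronglyMeasurable ?_
        exact MeasureTheory.ae_restrict_of_forall_mem measurableSet_Ioc hbound
      -- lower bound for integral
      have hmono : (∫ _ in Set.Ioc (0 : ℝ) (1 - b), Real.log (1 + a * δ)) ≤
          ∫ r in Set.Ioc (0 : ℝ) (1 - b),
            Real.log (1 + ⟪(a • w : EuclideanSpace ℝ (Fin k)), v r - μ⟫) := by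
        refine MeasureTheory.setIntegral_mono_on (MeasureTheory.integrable_const _) hint
          measurableSet_Ioc ?_
        intro r hr
        exact Real.log_le_log (by linarith) (by linarith [hlow r hr])
      have hconst : (∫ _ in Set.Ioc (0 : ℝ) (1 - b), Real.log (1 + a * δ)) =
          (1 - b) * Real.log (1 + a * δ) := by
        rw [MeasureTheory.setIntegral_const, Real.volume_real_Ioc_of_le (by linarith), smul_eq_mul]
        ring_nf
      have hMlt : M < (1 - b) * Real.log (1 + a * δ) := by
        have h1 : Real.log (Real.exp (M / (1 - b))) < Real.log (1 + a * δ) := by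
          apply Real.log_lt_log (Real.exp_pos _)
          rw [haδ]; linarith
        rw [Real.log_exp] at h1
        calc M = (1 - b) * (M / (1 - b)) := by field_simp
          _ < (1 - b) * Real.log (1 + a * δ) := by
              exact mul_lt_mul_of_pos_left h1 h1b
      have : M < (∫ r in Set.Ioc (0 : ℝ) (1 - b),
          Real.log (1 + ⟪(a • w : EuclideanSpace ℝ (Fin k)), v r - μ⟫)) := by
        calc M < (1 - b) * Real.log (1 + a * δ) := hMlt
          _ = _ := hconst.symm
          _ ≤ _ := hmono
      exact lt_of_lt_of_le hyM (by exact_mod_cast EReal.coe_le_coe_iff.2 this.le)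
    rw [hG]
    simp only
    rw [hsup, EReal.coe_mul_top_of_pos (div_pos two_pos hb0), EReal.top_add_coe]
  refine ⟨key, ?_⟩
  apply le_antisymm
  · exact le_iInf₂ fun μ _ => iInf_le _ μ
  · refine le_iInf fun μ => ?_
    by_cases h : μ ∈ closure (convexHull ℝ (v '' Set.Ioc (0 : ℝ) (1 - b)))
    · exact iInf₂_le μ h
    · rw [key μ h]; exact le_top
end
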